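/- Let k1, k−1, k2, e0, s0 be positive reals and set K_M = (k−1+k2)/k1, ε_SS = e0/(K_M+s0), t_C = 1/(k1(s0+K_M)) and t_D = (K_M+s0)/(k2·e0). Then t_C/t_D = ε_SS / ((1 + k−1/k2)(1 + s0/K_M)), and consequently t_C/t_D ≤ ε_SS. -/

import Mathlib

/-- ratio of fast to slow timescales in the Michaelis-Menten mechanism. -/
theorem timescale_ratio (k1 km1 k2 e0 s0 KM εSS tC tD : ℝ)
    (hk1 : 0 < k1) (hkm1 : 0 < km1) (hk2 : 0 < k2) (he0 : 0 < e0) (hs0 : 0 < s0)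
    (hKM : KM = (km1 + k2) / k1)
    (hεSS : εSS = e0 / (KM + s0))
    (htC : tC = 1 / (k1 * (s0 + KM)))
    (htD : tD = (KM + s0) / (k2 * e0)) :
    tC / tD = εSS / ((1 + km1 / k2) * (1 + s0 / KM)) ∧ tC / tD ≤ εSS := by
  have hKMpos : 0 < KM := by
    rw [hKM]; positivity
  have hden : 0 < KM + s0 := by positivity
  have hKMeq : KM * k1 = km1 + k2 := by
    rw [hKM, div_mul_cancel₀ _ hk1.ne']
  have heq : tC / tD = εSS / ((1 + km1 / k2) * (1 + s0 / KM)) := by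
    subst hεSS htC htD
    field_simp
    linear_combination (-(KM + s0)) * hKMeq
  refine ⟨heq, ?_⟩
  rw [heq]
  have hε : 0 < εSS := by rw [hεSS]; positivity
  have h1 : (1:ℝ) ≤ (1 + km1 / k2) * (1 + s0 / KM) := by
    nlinarith [div_pos hkm1 hk2, div_pos hs0 hKMpos]
  calc εSS / ((1 + km1 / k2) * (1 + s0 / KM)) ≤ εSS / 1 :=
        div_le_div_of_nonneg_left hε.le (by linarith) h1
    _ = εSS := div_one _
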